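/- Let G be a discriminating group and w an element of the free group F on countably many generators. If w is a weak identity in G (of any height N), then w is an identity in G (i.e., every homomorphism F → G kills w). -/

import Mathlib

/-- A group G is discriminating if for every finite list of elements of G × G there is
a homomorphism G × G → G killing exactly the trivial ones. -/
def IsDiscriminating (G : Type*) [Group G] : Prop :=
  ∀ (N : ℕ) (h : Fin N → G × G),
    ∃ ρ : G × G →* G, ∀ i, ρ (h i) = 1 ↔ h i = 1

theorem pi_discriminating (G : Type*) [Group G] (hG : IsDiscriminating G) :
    ∀ (n M : ℕ) (h : Fin M → (Fin n → G)),
      ∃ ρ : (Fin n → G) →* G, ∀ i, ρ (h i) = 1 ↔ h i = 1 := by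
  intro n
  induction n with
  | zero =>
    intro M h
    refine ⟨1, fun i => ?_⟩
    simp [Subsingleton.elim (h i) 1]
  | succ n ih =>
    intro M h
    obtain ⟨ρ₁, hρ₁⟩ := ih M (fun i => Fin.tail (h i))
    obtain ⟨σ, hσ⟩ := hG M (fun i => (h i 0, ρ₁ (Fin.tail (h i))))
    refine ⟨{ toFun := fun x => σ (x 0, ρ₁ (Fin.tail x)),
              map_one' := by
                have : Fin.tail (1 : Fin (n+1) → G) = (1 : Fin n → G) := rfl
                rw [this]
                simp
                exact map_one σ,
              map_mul' := by
                intro x y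
                rw [← map_mul, show Fin.tail (x*y) = Fin.tail x * Fin.tail y from rfl, map_mul]
                rfl }, fun i => ?_⟩
    simp only [MonoidHom.coe_mk, OneHom.coe_mk]
    rw [hσ i, Prod.mk_eq_one, hρ₁ i]
    constructor
    · rintro ⟨h0, ht⟩
      funext j
      cases j using Fin.cases with
      | zero => exact h0
      | succ j => exact congrFun ht j
    · intro he
      rw [he]
      exact ⟨rfl, funext fun j => rfl⟩

/-- In a discriminating group, every weak identity (of any positive height N) is an
identity: every homomorphism from the free group F on countably many generators
kills it. -/
theorem weak_identity_is_identity_of_discriminating (G : Type*) [Group G]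
    (hG : IsDiscriminating G) (w : FreeGroup ℕ) (N : ℕ) (hN : 0 < N)
    (hw : ∀ ρ : (Fin N → FreeGroup ℕ) →* G, ∃ k : Fin N,
      ρ (MonoidHom.mulSingle (fun _ : Fin N => FreeGroup ℕ) k w) = 1) :
    ∀ π : FreeGroup ℕ →* G, π w = 1 := by
  intro π
  by_contra hπ
  obtain ⟨ρ', hρ'⟩ := pi_discriminating G hG N N (fun k => Pi.mulSingle k (π w))
  obtain ⟨k, hk⟩ := hw (ρ'.comp (π.compLeft (Fin N)))
  have heq : (π.compLeft (Fin N)) (MonoidHom.mulSingle (fun _ : Fin N => FreeGroup ℕ) k w)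
      = Pi.mulSingle k (π w) := by
    funext j
    by_cases hj : j = k
    · subst hj; simp [MonoidHom.compLeft]
    · simp [MonoidHom.compLeft, Pi.mulSingle_eq_of_ne hj]
  have : ρ' (Pi.mulSingle k (π w)) = 1 := by
    rw [← heq, ← MonoidHom.comp_apply, hk]
  rw [hρ' k] at this
  exact hπ (by simpa using congrFun this k)
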